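/- Let Λ > 0, M ≥ 1, and let γ : ℝ → ℝ be twice continuously differentiable with |γ'(s)| ≤ Λ and |γ''(s)| ≤ Λ for all s ∈ ℝ. For θ ∈ ℝ let R(θ) be the rotation about the x₃-axis by angle θ, and for x ∈ ℝ³ let W(x) be the 3×3 matrix equal to the identity except that its (2,3) entry is w(x) = γ'(x₃)(cos(γ(x₃)) x₁ + sin(γ(x₃)) x₂). For ε > 0 and k ∈ ℤ³ set x_k^ε = R(γ(ε k₃)) (ε k) ∈ ℝ³. Then there exists a constant C, depending only on Λ and M, such that for every ε ∈ (0, 1] and all κ, ξ ∈ ℤ³ with ε|κ| ≤ M and ε|ξ| ≤ M, the second and third components of the vector R(γ(ε κ₃))⁻¹ (x_{κ+ξ}^ε − x_κ^ε) − ε W(x_κ^ε) ξ have absolute value at most C ε² |ξ|². -/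

import Mathlib

open Set

/-- Euclidean norm on `ℝ³` (realized as `Fin 3 → ℝ`). -/
noncomputable def enorm3 (x : Fin 3 → ℝ) : ℝ := Real.sqrt (∑ i, x i ^ 2)

/-- Coordinatewise cast of an integer vector to a real vector. -/
def intCast3 (k : Fin 3 → ℤ) : Fin 3 → ℝ := fun i => (k i : ℝ)

/-- Rotation about the `x₃`-axis by angle `θ`. -/
noncomputable def rotZ (θ : ℝ) : Matrix (Fin 3) (Fin 3) ℝ :=
  !![Real.cos θ, -Real.sin θ, 0; Real.sin θ, Real.cos θ, 0; 0, 0, 1]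

/-- The shear function `w(x) = γ'(x₃)(cos(γ(x₃)) x₁ + sin(γ(x₃)) x₂)`. -/
noncomputable def wFun (γ : ℝ → ℝ) (x : Fin 3 → ℝ) : ℝ :=
  deriv γ (x 2) * (Real.cos (γ (x 2)) * x 0 + Real.sin (γ (x 2)) * x 1)

/-- The matrix `W(x)`: the identity except that its `(2,3)` entry equals `w(x)`. -/
noncomputable def Wmat (γ : ℝ → ℝ) (x : Fin 3 → ℝ) : Matrix (Fin 3) (Fin 3) ℝ :=
  !![1, 0, 0; 0, 1, wFun γ x; 0, 0, 1]

/-- The cell centre `x_k^ε = R(γ(ε k₃)) (ε k)` of the non-periodic plywood-like structure. -/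
noncomputable def xk (γ : ℝ → ℝ) (ε : ℝ) (k : Fin 3 → ℤ) : Fin 3 → ℝ :=
  (rotZ (γ (ε * (k 2 : ℝ)))).mulVec (ε • intCast3 k)

/-! ### Auxiliary lemmas -/

lemma lipAux (f : ℝ → ℝ) (hf : Differentiable ℝ f) (L : ℝ)
    (h : ∀ s, |deriv f s| ≤ L) (a b : ℝ) : |f b - f a| ≤ L * |b - a| := by
  have := Convex.norm_image_sub_le_of_norm_deriv_le (s := univ)
    (fun x _ => hf x) (fun x _ => by simpa [Real.norm_eq_abs] using h x)
    convex_univ (mem_univ a) (mem_univ b)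
  simpa [Real.norm_eq_abs] using this

lemma taylorAux (f : ℝ → ℝ) (hf : Differentiable ℝ f) (hf' : Differentiable ℝ (deriv f)) (L : ℝ)
    (h : ∀ s, |deriv (deriv f) s| ≤ L) (a b : ℝ) :
    |f b - f a - (b - a) * deriv f a| ≤ L * (b - a) ^ 2 := by
  have key := Convex.norm_image_sub_le_of_norm_hasDerivWithin_le
    (s := uIcc a b) (f := fun t => f t - t * deriv f a)
    (f' := fun t => deriv f t - deriv f a)
    (fun x _ => by
      have h := ((hf x).hasDerivAt.sub
        ((hasDerivAt_id x).mul_const (deriv f a))).hasDerivWithinAt (s := uIcc a b)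
      simp only [one_mul] at h; exact h)
    (C := L * |b - a|)
    (fun x hx => by
      have h1 : |deriv f x - deriv f a| ≤ L * |x - a| := lipAux (deriv f) hf' L h a x
      have h2 : |x - a| ≤ |b - a| := abs_sub_left_of_mem_uIcc hx
      have hL : 0 ≤ L := le_trans (abs_nonneg _) (h 0)
      calc ‖deriv f x - deriv f a‖ = |deriv f x - deriv f a| := rfl
        _ ≤ L * |x - a| := h1
        _ ≤ L * |b - a| := by nlinarith)
    (convex_uIcc a b) left_mem_uIcc right_mem_uIcc
  have : |f b - b * deriv f a - (f a - a * deriv f a)| ≤ L * |b - a| * |b - a| := by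
    simpa [Real.norm_eq_abs] using key
  calc |f b - f a - (b - a) * deriv f a| = |f b - b * deriv f a - (f a - a * deriv f a)| := by
        ring_nf
    _ ≤ L * |b - a| * |b - a| := this
    _ = L * (b - a) ^ 2 := by
        rw [mul_assoc, ← abs_mul, abs_of_nonneg (mul_self_nonneg (b - a))]; ring

lemma sinTaylor (x : ℝ) : |Real.sin x - x| ≤ x ^ 2 := by
  have := taylorAux Real.sin Real.differentiable_sin
    (by rw [Real.deriv_sin]; exact Real.differentiable_cos) 1
    (fun s => by
      rw [Real.deriv_sin, Real.deriv_cos']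
      simpa using Real.abs_sin_le_one s) 0 x
  simpa [Real.deriv_sin] using this

lemma cosTaylor (x : ℝ) : |Real.cos x - 1| ≤ x ^ 2 := by
  have := taylorAux Real.cos Real.differentiable_cos
    (by rw [Real.deriv_cos']; exact Real.differentiable_sin.neg) 1
    (fun s => by
      rw [Real.deriv_cos']
      have : deriv (fun x => -Real.sin x) s = -Real.cos s := by
        simp [Real.deriv_sin]
      rw [this]
      simpa using Real.abs_cos_le_one s) 0 x
  simpa [Real.deriv_cos'] using this

lemma rotZ_inv (θ : ℝ) : (rotZ θ)⁻¹ = rotZ (-θ) := by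
  apply Matrix.inv_eq_right_inv
  ext i j
  fin_cases i <;> fin_cases j <;>
    simp [rotZ, Matrix.mul_apply, Fin.sum_univ_three, Real.sin_neg, Real.cos_neg] <;>
    nlinarith [Real.sin_sq_add_cos_sq θ]

lemma mulVec3 (A : Matrix (Fin 3) (Fin 3) ℝ) (y : Fin 3 → ℝ) (i : Fin 3) :
    A.mulVec y i = A i 0 * y 0 + A i 1 * y 1 + A i 2 * y 2 := by
  simp [Matrix.mulVec, dotProduct, Fin.sum_univ_three]

lemma xk_apply (γ : ℝ → ℝ) (ε : ℝ) (k : Fin 3 → ℤ) :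
    xk γ ε k 0 = Real.cos (γ (ε * (k 2 : ℝ))) * (ε * (k 0 : ℝ))
               - Real.sin (γ (ε * (k 2 : ℝ))) * (ε * (k 1 : ℝ)) ∧
    xk γ ε k 1 = Real.sin (γ (ε * (k 2 : ℝ))) * (ε * (k 0 : ℝ))
               + Real.cos (γ (ε * (k 2 : ℝ))) * (ε * (k 1 : ℝ)) ∧
    xk γ ε k 2 = ε * (k 2 : ℝ) := by
  refine ⟨?_, ?_, ?_⟩ <;>
  · rw [xk, mulVec3]
    simp [rotZ, intCast3]
    try ring

lemma v_components (γ : ℝ → ℝ) (ε : ℝ) (κ ξ : Fin 3 → ℤ) (v : Fin 3 → ℝ)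
    (hv : v = (rotZ (γ (ε * (κ 2 : ℝ))))⁻¹.mulVec (xk γ ε (κ + ξ) - xk γ ε κ) -
      ε • (Wmat γ (xk γ ε κ)).mulVec (intCast3 ξ)) :
    v 1 = ε * Real.sin (γ (ε * ((κ 2 : ℝ) + (ξ 2 : ℝ))) - γ (ε * (κ 2 : ℝ))) * ((κ 0 : ℝ) + (ξ 0 : ℝ))
        + ε * (Real.cos (γ (ε * ((κ 2 : ℝ) + (ξ 2 : ℝ))) - γ (ε * (κ 2 : ℝ))) - 1) * ((κ 1 : ℝ) + (ξ 1 : ℝ))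
        - ε ^ 2 * deriv γ (ε * (κ 2 : ℝ)) * (κ 0 : ℝ) * (ξ 2 : ℝ) ∧ v 2 = 0 := by
  obtain ⟨hk0, hk1, hk2⟩ := xk_apply γ ε κ
  obtain ⟨hs0, hs1, hs2⟩ := xk_apply γ ε (κ + ξ)
  have hcast : ∀ i, ((κ + ξ) i : ℝ) = (κ i : ℝ) + (ξ i : ℝ) := by
    intro i; simp
  simp only [hcast] at hs0 hs1 hs2
  have hw : wFun γ (xk γ ε κ) = deriv γ (ε * (κ 2 : ℝ)) *
      (Real.cos (γ (ε * (κ 2 : ℝ))) * xk γ ε κ 0 + Real.sin (γ (ε * (κ 2 : ℝ))) * xk γ ε κ 1) := by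
    rw [wFun, hk2]
  rw [hk0, hk1] at hw
  subst hv
  rw [rotZ_inv]
  have pyth := Real.sin_sq_add_cos_sq (γ (ε * (κ 2 : ℝ)))
  constructor
  · rw [Pi.sub_apply, Pi.smul_apply, mulVec3, mulVec3, Pi.sub_apply, Pi.sub_apply,
      Pi.sub_apply, hs0, hs1, hs2, hk0, hk1, hk2]
    simp only [rotZ, Wmat, intCast3, Matrix.cons_val', Matrix.cons_val_zero,
      Matrix.cons_val_one, Matrix.head_cons, Matrix.empty_val', Matrix.cons_val_fin_one,
      Matrix.head_fin_const, Real.sin_neg, Real.cos_neg, smul_eq_mul, Matrix.cons_val_two,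
      Matrix.tail_cons, Matrix.of_apply, Fin.isValue]
    rw [hw, Real.sin_sub, Real.cos_sub]
    linear_combination (-(ε * ((κ 1 : ℤ) : ℝ)) -
      ε ^ 2 * deriv γ (ε * ((κ 2 : ℤ) : ℝ)) * ((κ 0 : ℤ) : ℝ) * ((ξ 2 : ℤ) : ℝ)) * pyth
  · rw [Pi.sub_apply, Pi.smul_apply, mulVec3, mulVec3, Pi.sub_apply, Pi.sub_apply,
      Pi.sub_apply, hs0, hs1, hs2, hk0, hk1, hk2]
    simp only [rotZ, Wmat, intCast3, Matrix.cons_val', Matrix.cons_val_zero,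
      Matrix.cons_val_one, Matrix.head_cons, Matrix.empty_val', Matrix.cons_val_fin_one,
      Matrix.head_fin_const, Real.sin_neg, Real.cos_neg, smul_eq_mul, Matrix.cons_val_two,
      Matrix.tail_cons, Matrix.of_apply, Fin.isValue]
    ring

lemma abs_le_enorm3 (x : Fin 3 → ℝ) (i : Fin 3) : |x i| ≤ enorm3 x := by
  rw [enorm3, ← Real.sqrt_sq_eq_abs]
  exact Real.sqrt_le_sqrt (Finset.single_le_sum (fun j _ => sq_nonneg (x j)) (Finset.mem_univ i))

lemma enorm3_nonneg (x : Fin 3 → ℝ) : 0 ≤ enorm3 x := Real.sqrt_nonneg _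

/-- Taylor-expansion estimate: the second and third components of
`R(γ(ε κ₃))⁻¹ (x_{κ+ξ}^ε − x_κ^ε) − ε W(x_κ^ε) ξ` are of order `ε² |ξ|²`, with a constant
depending only on `Λ` and `M`. -/
theorem stmt_11 (Λ M : ℝ) (hΛ : 0 < Λ) (hM : 1 ≤ M) :
    ∃ C : ℝ, ∀ γ : ℝ → ℝ, ContDiff ℝ 2 γ →
      (∀ s : ℝ, |deriv γ s| ≤ Λ) → (∀ s : ℝ, |deriv (deriv γ) s| ≤ Λ) →
      ∀ ε : ℝ, 0 < ε → ε ≤ 1 →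
        ∀ κ ξ : Fin 3 → ℤ,
          ε * enorm3 (intCast3 κ) ≤ M → ε * enorm3 (intCast3 ξ) ≤ M →
          ∀ v : Fin 3 → ℝ,
            v = (rotZ (γ (ε * (κ 2 : ℝ))))⁻¹.mulVec (xk γ ε (κ + ξ) - xk γ ε κ) -
                  ε • (Wmat γ (xk γ ε κ)).mulVec (intCast3 ξ) →
            |v 1| ≤ C * ε ^ 2 * enorm3 (intCast3 ξ) ^ 2 ∧
            |v 2| ≤ C * ε ^ 2 * enorm3 (intCast3 ξ) ^ 2 := by
  refine ⟨4 * M * Λ ^ 2 + 2 * M * Λ + Λ, ?_⟩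
  intro γ hγ hγ' hγ'' ε hε hε1 κ ξ hκM hξM v hv
  have hM0 : (0 : ℝ) < M := lt_of_lt_of_le one_pos hM
  set C : ℝ := 4 * M * Λ ^ 2 + 2 * M * Λ + Λ with hC
  have hCnn : 0 ≤ C := by
    rw [hC]
    nlinarith [mul_nonneg hM0.le (sq_nonneg Λ), mul_nonneg hM0.le hΛ.le, hΛ.le]
  -- differentiability
  have hγd : Differentiable ℝ γ := hγ.differentiable (by norm_num)
  have hγ'd : Differentiable ℝ (deriv γ) := by
    have h2 : ContDiff ℝ (1 + 1) γ := by
      have : ((2 : ℕ) : WithTop ℕ∞) = 1 + 1 := by norm_num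
      rw [← this]; exact_mod_cast hγ
    exact ((contDiff_succ_iff_deriv.mp h2).2.2).differentiable one_ne_zero
  -- notation
  set N : ℝ := enorm3 (intCast3 ξ) with hN
  set K : ℝ := enorm3 (intCast3 κ) with hK
  set a : ℝ := ε * (κ 2 : ℝ) with ha
  set b : ℝ := ε * ((κ 2 : ℝ) + (ξ 2 : ℝ)) with hb
  set g : ℝ := deriv γ a with hg
  set δ : ℝ := γ b - γ a with hδdef
  obtain ⟨hv1, hv2⟩ := v_components γ ε κ ξ v hv
  have hNnn : 0 ≤ N := enorm3_nonneg _
  have hKnn : 0 ≤ K := enorm3_nonneg _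
  have hξ0 : |((ξ 0 : ℤ) : ℝ)| ≤ N := abs_le_enorm3 (intCast3 ξ) 0
  have hξ1 : |((ξ 1 : ℤ) : ℝ)| ≤ N := abs_le_enorm3 (intCast3 ξ) 1
  have hξ2 : |((ξ 2 : ℤ) : ℝ)| ≤ N := abs_le_enorm3 (intCast3 ξ) 2
  have hκ0 : |((κ 0 : ℤ) : ℝ)| ≤ K := abs_le_enorm3 (intCast3 κ) 0
  have hκ1 : |((κ 1 : ℤ) : ℝ)| ≤ K := abs_le_enorm3 (intCast3 κ) 1
  clear_value N K
  -- `|δ| ≤ Λ ε N`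
  have hba : b - a = ε * ((ξ 2 : ℤ) : ℝ) := by rw [ha, hb]; ring
  have habs_ba : |b - a| ≤ ε * N := by
    rw [hba, abs_mul, abs_of_pos hε]
    exact mul_le_mul_of_nonneg_left hξ2 hε.le
  have hδ : |δ| ≤ Λ * (ε * N) := by
    have h := lipAux γ hγd Λ hγ' a b
    calc |δ| ≤ Λ * |b - a| := h
      _ ≤ Λ * (ε * N) := mul_le_mul_of_nonneg_left habs_ba hΛ.le
  have hδsq : δ ^ 2 ≤ Λ ^ 2 * ε ^ 2 * N ^ 2 := by
    have := pow_le_pow_left₀ (abs_nonneg δ) hδ 2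
    rw [sq_abs] at this
    calc δ ^ 2 ≤ (Λ * (ε * N)) ^ 2 := this
      _ = Λ ^ 2 * ε ^ 2 * N ^ 2 := by ring
  -- sin/cos estimates
  have hsin : |Real.sin δ - δ| ≤ Λ ^ 2 * ε ^ 2 * N ^ 2 := le_trans (sinTaylor δ) hδsq
  have hcos : |Real.cos δ - 1| ≤ Λ ^ 2 * ε ^ 2 * N ^ 2 := le_trans (cosTaylor δ) hδsq
  -- first-order Taylor estimate for `γ`
  have hξ2sq : ((ξ 2 : ℤ) : ℝ) ^ 2 ≤ N ^ 2 :=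
    sq_le_sq' (abs_le.mp hξ2).1 (abs_le.mp hξ2).2
  have htay : |δ - ε * ((ξ 2 : ℤ) : ℝ) * g| ≤ Λ * ε ^ 2 * N ^ 2 := by
    have h := taylorAux γ hγd hγ'd Λ hγ'' a b
    rw [hba] at h
    calc |δ - ε * ((ξ 2 : ℤ) : ℝ) * g| = |γ b - γ a - ε * ((ξ 2 : ℤ) : ℝ) * deriv γ a| := by
          rw [hδdef, hg]
      _ ≤ Λ * (ε * ((ξ 2 : ℤ) : ℝ)) ^ 2 := h
      _ = Λ * (ε ^ 2 * ((ξ 2 : ℤ) : ℝ) ^ 2) := by ring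
      _ ≤ Λ * (ε ^ 2 * N ^ 2) :=
          mul_le_mul_of_nonneg_left
            (mul_le_mul_of_nonneg_left hξ2sq (sq_nonneg ε)) hΛ.le
      _ = Λ * ε ^ 2 * N ^ 2 := by ring
  have hgΛ : |g| ≤ Λ := hγ' a
  -- size of the lattice points
  have hεN : ε * N ≤ M := hξM
  have hεK : ε * K ≤ M := hκM
  have hεP : ε * |((κ 0 : ℤ) : ℝ) + ((ξ 0 : ℤ) : ℝ)| ≤ 2 * M := by
    calc ε * |((κ 0 : ℤ) : ℝ) + ((ξ 0 : ℤ) : ℝ)| ≤ ε * (K + N) :=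
          mul_le_mul_of_nonneg_left
            (le_trans (abs_add_le _ _) (add_le_add hκ0 hξ0)) hε.le
      _ = ε * K + ε * N := by ring
      _ ≤ M + M := add_le_add hεK hεN
      _ = 2 * M := by ring
  have hεQ : ε * |((κ 1 : ℤ) : ℝ) + ((ξ 1 : ℤ) : ℝ)| ≤ 2 * M := by
    calc ε * |((κ 1 : ℤ) : ℝ) + ((ξ 1 : ℤ) : ℝ)| ≤ ε * (K + N) :=
          mul_le_mul_of_nonneg_left
            (le_trans (abs_add_le _ _) (add_le_add hκ1 hξ1)) hε.le
      _ = ε * K + ε * N := by ring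
      _ ≤ M + M := add_le_add hεK hεN
      _ = 2 * M := by ring
  constructor
  · -- second component
    have hsplit : v 1 =
        ε * (Real.sin δ - δ) * (((κ 0 : ℤ) : ℝ) + ((ξ 0 : ℤ) : ℝ))
        + ε * (δ - ε * ((ξ 2 : ℤ) : ℝ) * g) * (((κ 0 : ℤ) : ℝ) + ((ξ 0 : ℤ) : ℝ))
        + ε ^ 2 * g * ((ξ 2 : ℤ) : ℝ) * ((ξ 0 : ℤ) : ℝ)
        + ε * (Real.cos δ - 1) * (((κ 1 : ℤ) : ℝ) + ((ξ 1 : ℤ) : ℝ)) := by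
      rw [hv1, hδdef, hg, hb, ha]; ring
    have b1 : |ε * (Real.sin δ - δ) * (((κ 0 : ℤ) : ℝ) + ((ξ 0 : ℤ) : ℝ))| ≤
        2 * M * Λ ^ 2 * ε ^ 2 * N ^ 2 := by
      rw [abs_mul, abs_mul, abs_of_pos hε]
      calc ε * |Real.sin δ - δ| * |((κ 0 : ℤ) : ℝ) + ((ξ 0 : ℤ) : ℝ)|
          = (ε * |((κ 0 : ℤ) : ℝ) + ((ξ 0 : ℤ) : ℝ)|) * |Real.sin δ - δ| := by ring
        _ ≤ (2 * M) * (Λ ^ 2 * ε ^ 2 * N ^ 2) :=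
            mul_le_mul hεP hsin (abs_nonneg _) (by positivity)
        _ = 2 * M * Λ ^ 2 * ε ^ 2 * N ^ 2 := by ring
    have b2 : |ε * (δ - ε * ((ξ 2 : ℤ) : ℝ) * g) * (((κ 0 : ℤ) : ℝ) + ((ξ 0 : ℤ) : ℝ))| ≤
        2 * M * Λ * ε ^ 2 * N ^ 2 := by
      rw [abs_mul, abs_mul, abs_of_pos hε]
      calc ε * |δ - ε * ((ξ 2 : ℤ) : ℝ) * g| * |((κ 0 : ℤ) : ℝ) + ((ξ 0 : ℤ) : ℝ)|
          = (ε * |((κ 0 : ℤ) : ℝ) + ((ξ 0 : ℤ) : ℝ)|) * |δ - ε * ((ξ 2 : ℤ) : ℝ) * g| := by ring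
        _ ≤ (2 * M) * (Λ * ε ^ 2 * N ^ 2) :=
            mul_le_mul hεP htay (abs_nonneg _) (by positivity)
        _ = 2 * M * Λ * ε ^ 2 * N ^ 2 := by ring
    have b3 : |ε ^ 2 * g * ((ξ 2 : ℤ) : ℝ) * ((ξ 0 : ℤ) : ℝ)| ≤ Λ * ε ^ 2 * N ^ 2 := by
      rw [abs_mul, abs_mul, abs_mul, abs_pow, abs_of_pos hε]
      have h1 : |g| * |((ξ 2 : ℤ) : ℝ)| ≤ Λ * N :=
        mul_le_mul hgΛ hξ2 (abs_nonneg _) hΛ.le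
      have h2 : |g| * |((ξ 2 : ℤ) : ℝ)| * |((ξ 0 : ℤ) : ℝ)| ≤ Λ * N * N :=
        mul_le_mul h1 hξ0 (abs_nonneg _) (by positivity)
      calc ε ^ 2 * |g| * |((ξ 2 : ℤ) : ℝ)| * |((ξ 0 : ℤ) : ℝ)|
          = ε ^ 2 * (|g| * |((ξ 2 : ℤ) : ℝ)| * |((ξ 0 : ℤ) : ℝ)|) := by ring
        _ ≤ ε ^ 2 * (Λ * N * N) := mul_le_mul_of_nonneg_left h2 (sq_nonneg ε)
        _ = Λ * ε ^ 2 * N ^ 2 := by ring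
    have b4 : |ε * (Real.cos δ - 1) * (((κ 1 : ℤ) : ℝ) + ((ξ 1 : ℤ) : ℝ))| ≤
        2 * M * Λ ^ 2 * ε ^ 2 * N ^ 2 := by
      rw [abs_mul, abs_mul, abs_of_pos hε]
      calc ε * |Real.cos δ - 1| * |((κ 1 : ℤ) : ℝ) + ((ξ 1 : ℤ) : ℝ)|
          = (ε * |((κ 1 : ℤ) : ℝ) + ((ξ 1 : ℤ) : ℝ)|) * |Real.cos δ - 1| := by ring
        _ ≤ (2 * M) * (Λ ^ 2 * ε ^ 2 * N ^ 2) :=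
            mul_le_mul hεQ hcos (abs_nonneg _) (by positivity)
        _ = 2 * M * Λ ^ 2 * ε ^ 2 * N ^ 2 := by ring
    calc |v 1| ≤ |ε * (Real.sin δ - δ) * (((κ 0 : ℤ) : ℝ) + ((ξ 0 : ℤ) : ℝ))|
          + |ε * (δ - ε * ((ξ 2 : ℤ) : ℝ) * g) * (((κ 0 : ℤ) : ℝ) + ((ξ 0 : ℤ) : ℝ))|
          + |ε ^ 2 * g * ((ξ 2 : ℤ) : ℝ) * ((ξ 0 : ℤ) : ℝ)|
          + |ε * (Real.cos δ - 1) * (((κ 1 : ℤ) : ℝ) + ((ξ 1 : ℤ) : ℝ))| := by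
            rw [hsplit]
            exact le_trans (abs_add_le _ _) (add_le_add (le_trans (abs_add_le _ _)
              (add_le_add (abs_add_le _ _) le_rfl)) le_rfl)
      _ ≤ 2 * M * Λ ^ 2 * ε ^ 2 * N ^ 2 + 2 * M * Λ * ε ^ 2 * N ^ 2
          + Λ * ε ^ 2 * N ^ 2 + 2 * M * Λ ^ 2 * ε ^ 2 * N ^ 2 := by
            linarith [b1, b2, b3, b4]
      _ = C * ε ^ 2 * N ^ 2 := by rw [hC]; ring
  · -- third component
    rw [hv2]
    simp only [abs_zero]
    exact mul_nonneg (mul_nonneg hCnn (sq_nonneg ε)) (sq_nonneg N)
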